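/- Let Ω ⊂ ℝ^n be open, u : Ω → ℝ^N be in L¹(Ω), and let λ be a finite positive Borel measure on Ω. Suppose that for every closed coordinate cube Q(x,r) ⊂ Ω (center x, half side-length r) there exists a value u_{Q(x,r)} ∈ ℝ^N such that ∫_{Q(x,r)} |u − u_{Q(x,r)}| dy ≤ r · λ(Q(x,r)). Then u ∈ BV(Ω, ℝ^N) and |Du| ≤ C·λ for a constant C depending only on n. -/

import Mathlib

open MeasureTheory Metric Set


lemma lintegral_finset_biUnion_le {α ι : Type*} [MeasurableSpace α] (μ : Measure α)
    (f : α → ENNReal) (S : Finset ι) (A : ι → Set α) :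
    ∫⁻ a in ⋃ k ∈ S, A k, f a ∂μ ≤ ∑ k ∈ S, ∫⁻ a in A k, f a ∂μ := by
  classical
  induction S using Finset.induction with
  | empty => simp
  | insert _ _ h ih =>
    rename_i a s
    rw [Finset.set_biUnion_insert, Finset.sum_insert h]
    exact (lintegral_union_le _ _ _).trans (by gcongr)

lemma overlap_card {n : ℕ} {h : ℝ} (hh : 0 < h) (y : Fin n → ℝ) (S : Finset (Fin n → ℤ))
    [DecidablePred fun k : Fin n → ℤ => y ∈ closedBall (fun i => h * k i) (2*h)] :
    (S.filter fun k => y ∈ closedBall (fun i => h * k i) (2*h)).card ≤ 5 ^ n := by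
  classical
  have hsub : (S.filter fun k => y ∈ closedBall (fun i => h * k i) (2*h)) ⊆
      Fintype.piFinset fun i => Finset.Icc (⌊y i / h⌋ - 2) (⌊y i / h⌋ + 2) := by
    intro k hk
    rw [Finset.mem_filter] at hk
    rw [Fintype.mem_piFinset]
    intro i
    have h1 : dist (y i) (h * k i) ≤ 2 * h :=
      le_trans (dist_le_pi_dist y (fun i => h * k i) i) (mem_closedBall.mp hk.2)
    rw [Real.dist_eq, abs_le] at h1
    have e1 : h * (y i / h) = y i := mul_div_cancel₀ _ hh.ne'
    have hk1 : (k i : ℝ) ≤ y i / h + 2 := by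
      have : h * (k i : ℝ) ≤ h * (y i / h + 2) := by
        rw [mul_add, e1]; linarith [h1.1]
      exact le_of_mul_le_mul_left this hh
    have hk2 : y i / h - 2 ≤ (k i : ℝ) := by
      have : h * (y i / h - 2) ≤ h * (k i : ℝ) := by
        rw [mul_sub, e1]; linarith [h1.2]
      exact le_of_mul_le_mul_left this hh
    rw [Finset.mem_Icc]
    constructor
    · have h2 : (⌊y i / h⌋ : ℝ) - 3 < (k i : ℝ) := by
        have := Int.floor_le (y i / h); linarith
      have h3 : (⌊y i / h⌋ - 3 : ℤ) < k i := by exact_mod_cast h2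
      omega
    · have h2 : (k i : ℝ) < (⌊y i / h⌋ : ℝ) + 3 := by
        have := Int.lt_floor_add_one (y i / h); linarith
      have h3 : (k i : ℤ) < ⌊y i / h⌋ + 3 := by exact_mod_cast h2
      omega
  calc (S.filter fun k => y ∈ closedBall (fun i => h * k i) (2*h)).card
      ≤ (Fintype.piFinset fun i => Finset.Icc (⌊y i / h⌋ - 2) (⌊y i / h⌋ + 2)).card :=
        Finset.card_le_card hsub
    _ = ∏ i : Fin n, (Finset.Icc (⌊y i / h⌋ - 2) (⌊y i / h⌋ + 2)).card :=
        Fintype.card_piFinset _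
    _ ≤ 5 ^ Finset.univ.card := Finset.prod_le_pow_card _ _ 5 (by
        intro i _
        rw [Int.card_Icc]
        omega)
    _ = 5 ^ n := by rw [Finset.card_univ, Fintype.card_fin]

lemma sum_measure_cubes_le {n : ℕ} (lam : Measure (Fin n → ℝ)) {h : ℝ} (hh : 0 < h)
    {U : Set (Fin n → ℝ)} (hU : MeasurableSet U) (S : Finset (Fin n → ℤ))
    (hsub : ∀ k ∈ S, closedBall (fun i => h * k i) (2*h) ⊆ U) :
    ∑ k ∈ S, lam (closedBall (fun i => h * (k i : ℝ)) (2*h)) ≤ 5 ^ n * lam U := by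
  classical
  have e1 : ∀ k ∈ S, lam (closedBall (fun i => h * (k i : ℝ)) (2*h)) =
      ∫⁻ y, (closedBall (fun i => h * (k i : ℝ)) (2*h)).indicator 1 y ∂lam := by
    intro k _
    rw [lintegral_indicator_one measurableSet_closedBall]
  rw [Finset.sum_congr rfl e1, ← lintegral_finset_sum]
  · calc ∫⁻ y, ∑ k ∈ S, (closedBall (fun i => h * (k i : ℝ)) (2*h)).indicator 1 y ∂lam
        ≤ ∫⁻ y, (5 ^ n : ℕ) * U.indicator 1 y ∂lam := by
          apply lintegral_mono
          intro y
          dsimp only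
          by_cases hy : y ∈ U
          · have : ∑ k ∈ S, (closedBall (fun i => h * (k i : ℝ)) (2*h)).indicator 1 y
                = ((S.filter fun k => y ∈ closedBall (fun i => h * (k i : ℝ)) (2*h)).card : ENNReal) := by
              rw [← Finset.sum_boole]
              apply Finset.sum_congr rfl
              intro k _
              by_cases hk : y ∈ closedBall (fun i => h * (k i : ℝ)) (2*h) <;>
                simp [Set.indicator_apply, hk]
            rw [this, Set.indicator_of_mem hy]
            simp only [Pi.one_apply, mul_one]
            exact_mod_cast Nat.cast_le.mpr (overlap_card hh y S)
          · have : ∀ k ∈ S, (closedBall (fun i => h * (k i : ℝ)) (2*h)).indicator (1 : (Fin n → ℝ) → ENNReal) y = 0 := by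
              intro k hk
              apply Set.indicator_of_notMem
              exact fun hmem => hy (hsub k hk hmem)
            exact le_trans (le_of_eq (Finset.sum_eq_zero this)) zero_le
      _ = (5 ^ n : ℕ) * lam U := by
          rw [lintegral_const_mul _ (measurable_one.indicator hU), lintegral_indicator_one hU]
      _ = 5 ^ n * lam U := by norm_cast
  · exact fun k _ => measurable_one.indicator measurableSet_closedBall

section
variable {n N : ℕ}

lemma scalar_estimate {Ω : Set (Fin n → ℝ)} (hΩ : IsOpen Ω)
    {u : (Fin n → ℝ) → (Fin N → ℝ)} (hu : Integrable u (volume.restrict Ω))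
    {lam : Measure (Fin n → ℝ)} [IsFiniteMeasure lam]
    (hcube : ∀ (x : Fin n → ℝ) (r : ℝ), 0 < r → Metric.closedBall x r ⊆ Ω →
      ∃ c : Fin N → ℝ,
        (∫ y in Metric.closedBall x r, ‖u y - c‖) ≤ r * (lam (Metric.closedBall x r)).toReal)
    {U : Set (Fin n → ℝ)} (hUopen : IsOpen U) (hUΩ : U ⊆ Ω)
    {ψ : (Fin n → ℝ) → ℝ} (hψ : ContDiff ℝ 1 ψ) (hψc : HasCompactSupport ψ)
    (hψU : tsupport ψ ⊆ U) (hψ1 : ∀ x, |ψ x| ≤ 1)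
    {e : Fin n → ℝ} (he : ‖e‖ ≤ 1) (i : Fin N) :
    (∫ y in Ω, u y i * fderiv ℝ ψ y e) ≤ 4 * 5 ^ n * (lam U).toReal := by
  classical
  set K := tsupport ψ with hKdef
  have hK : IsCompact K := hψc
  have hKmeas : MeasurableSet K := (isClosed_tsupport ψ).measurableSet
  set D : (Fin n → ℝ) → ℝ := fun y => fderiv ℝ ψ y e with hDdef
  set w : (Fin n → ℝ) → ℝ := Ω.indicator (fun y => u y i) with hwdef
  have hui : IntegrableOn (fun y => u y i) Ω volume :=
    (ContinuousLinearMap.proj (R := ℝ) (φ := fun _ : Fin N => ℝ) i).integrable_comp hu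
  have hw : Integrable w volume := hui.integrable_indicator hΩ.measurableSet
  have hψcont : Continuous ψ := hψ.continuous
  have hDcont : Continuous D := (hψ.continuous_fderiv one_ne_zero).clm_apply continuous_const
  have hDsupp : Function.support D ⊆ K := by
    intro y hy
    apply support_fderiv_subset ℝ (f := ψ)
    intro h0
    exact hy (by simp [hDdef, h0])
  have hDc : HasCompactSupport D := hψc.mono' hDsupp
  -- Step A : rewrite the integral
  have stepA : ∫ y in Ω, u y i * fderiv ℝ ψ y e = ∫ y, D y * w y := by
    rw [← integral_indicator hΩ.measurableSet]
    congr 1; funext y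
    by_cases hy : y ∈ Ω
    · simp [Set.indicator_of_mem hy, hwdef, hDdef, mul_comm]
    · simp [Set.indicator_of_notMem hy, hwdef, hDdef]
  rw [stepA]
  -- ε-argument
  apply le_of_forall_pos_le_add
  intro ε hε
  set I1 := ∫ y, ‖w y‖ with hI1def
  have hI1 : 0 ≤ I1 := integral_nonneg fun y => norm_nonneg _
  set ε' := ε / (I1 + 1) with hε'def
  have hε' : 0 < ε' := div_pos hε (by linarith)
  -- uniform continuity of D
  obtain ⟨δ₂, hδ₂, H2⟩ := Metric.uniformContinuous_iff.mp
    (hDc.uniformContinuous_of_continuous hDcont) ε' hε'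
  -- thickening of K inside U
  obtain ⟨δ, hδpos, hδ⟩ := hK.exists_thickening_subset_open hUopen hψU
  set h := min (δ / 4) (δ₂ / 2) with hhdef
  have hh : 0 < h := lt_min (by linarith) (by linarith)
  have h3δ : 3 * h < δ := by
    have := min_le_left (δ / 4) (δ₂ / 2); simp only [← hhdef] at this; linarith
  have hhδ₂ : h < δ₂ := by
    have := min_le_right (δ / 4) (δ₂ / 2); simp only [← hhdef] at this; linarith
  set v : Fin n → ℝ := h • e with hvdef
  have hvnorm : ‖v‖ ≤ h := by
    rw [hvdef, norm_smul, Real.norm_eq_abs, abs_of_pos hh]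
    nlinarith
  set Dh : (Fin n → ℝ) → ℝ := fun y => (ψ (y + v) - ψ y) / h with hDhdef
  -- Claim 1 : |D y - Dh y| ≤ ε'
  have claim1 : ∀ y, |D y - Dh y| ≤ ε' := by
    intro y
    have hline : ∀ t : ℝ, HasDerivAt (fun t => ψ (y + t • e)) (D (y + t • e)) t := by
      intro t
      have h1 : HasFDerivAt ψ (fderiv ℝ ψ (y + t • e)) (y + t • e) :=
        (hψ.differentiable one_ne_zero).differentiableAt.hasFDerivAt
      have h2 : HasDerivAt (fun s : ℝ => y + s • e) e t := by
        simpa using ((hasDerivAt_id t).smul_const e).const_add y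
      exact h1.comp_hasDerivAt t h2
    have hcontD' : Continuous fun t : ℝ => D (y + t • e) :=
      hDcont.comp (continuous_const.add (continuous_id.smul continuous_const))
    have hFTC : ∫ t in (0:ℝ)..h, D (y + t • e) = ψ (y + v) - ψ y := by
      have := intervalIntegral.integral_eq_sub_of_hasDerivAt (f := fun t => ψ (y + t • e))
        (fun t _ => hline t) (hcontD'.intervalIntegrable 0 h)
      simpa [hvdef] using this
    have hrepr : D y - Dh y = (∫ t in (0:ℝ)..h, (D y - D (y + t • e))) / h := by
      rw [intervalIntegral.integral_sub intervalIntegrable_const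
        (hcontD'.intervalIntegrable 0 h), hFTC]
      simp only [intervalIntegral.integral_const, smul_eq_mul, sub_zero]
      field_simp [hDhdef]
      simp only [hDhdef]; rw [sub_mul, div_mul_cancel₀ _ hh.ne']
    rw [hrepr, abs_div, abs_of_pos hh, div_le_iff₀ hh]
    have hb : ‖∫ t in (0:ℝ)..h, (D y - D (y + t • e))‖ ≤ ε' * |h - 0| := by
      apply intervalIntegral.norm_integral_le_of_norm_le_const
      intro t ht
      rw [Set.uIoc_of_le hh.le] at ht
      have hdist : dist (y + t • e) y < δ₂ := by
        rw [dist_eq_norm, add_sub_cancel_left, norm_smul, Real.norm_eq_abs,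
          abs_of_pos ht.1]
        calc t * ‖e‖ ≤ t * 1 := by nlinarith [ht.1, he]
          _ = t := mul_one t
          _ ≤ h := ht.2
          _ < δ₂ := hhδ₂
      have := H2 hdist
      rw [Real.dist_eq] at this
      rw [Real.norm_eq_abs, abs_sub_comm]
      exact this.le
    rw [Real.norm_eq_abs] at hb
    calc |∫ t in (0:ℝ)..h, (D y - D (y + t • e))| ≤ ε' * |h - 0| := hb
      _ = ε' * h := by rw [sub_zero, abs_of_pos hh]
  -- bounds for ψ
  have hψb : ∀ x, ‖ψ x‖ ≤ 1 := fun x => by rw [Real.norm_eq_abs]; exact hψ1 x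
  -- integrability facts
  obtain ⟨CD, hCD⟩ := hDcont.bounded_above_of_compact_support hDc
  have hint1 : Integrable (fun y => D y * w y) volume :=
    hw.bdd_mul hDcont.aestronglyMeasurable (Filter.Eventually.of_forall hCD)
  have hDhcont : Continuous Dh :=
    ((hψcont.comp (continuous_id.add continuous_const)).sub hψcont).div_const h
  have hDhb : ∀ x, ‖Dh x‖ ≤ 2 / h := by
    intro x
    rw [Real.norm_eq_abs, hDhdef]
    rw [abs_div, abs_of_pos hh, div_le_div_iff_of_pos_right hh]
    calc |ψ (x + v) - ψ x| ≤ |ψ (x + v)| + |ψ x| := abs_sub _ _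
      _ ≤ 1 + 1 := add_le_add (hψ1 _) (hψ1 _)
      _ = 2 := by norm_num
  have hint2 : Integrable (fun y => Dh y * w y) volume :=
    hw.bdd_mul hDhcont.aestronglyMeasurable (Filter.Eventually.of_forall hDhb)
  have hint3 : Integrable (fun y => ε' * ‖w y‖) volume := hw.norm.const_mul ε'
  have intA : Integrable (fun y => ψ (y + v) * w y) volume :=
    hw.bdd_mul ((hψcont.comp (continuous_id.add continuous_const)).aestronglyMeasurable)
      (Filter.Eventually.of_forall fun x => hψb _)
  have intB : Integrable (fun y => ψ y * w y) volume :=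
    hw.bdd_mul hψcont.aestronglyMeasurable (Filter.Eventually.of_forall fun x => hψb _)
  have intC : Integrable (fun y => ψ y * w (y - v)) volume :=
    (hw.comp_sub_right v).bdd_mul hψcont.aestronglyMeasurable (Filter.Eventually.of_forall fun x => hψb _)
  have intD : Integrable (fun y => ψ y * (w (y - v) - w y)) volume := by
    have := intC.sub intB
    exact this.congr (Filter.Eventually.of_forall fun y => by simp only [Pi.sub_apply]; ring)
  have hg : Integrable (fun y => w (y - v) - w y) volume := (hw.comp_sub_right v).sub hw
  -- Claim 2 : difference quotient identity
  have track : ∫ y, Dh y * w y = ((∫ y, ψ (y + v) * w y) - ∫ y, ψ y * w y) / h := by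
    rw [← integral_sub intA intB, ← integral_div]
    congr 1; funext y
    rw [hDhdef]; ring
  have shift : ∫ y, ψ (y + v) * w y = ∫ y, ψ y * w (y - v) := by
    have h0 := integral_add_right_eq_self (μ := volume) (fun y => ψ y * w (y - v)) v
    have h1 : (fun x => ψ (x + v) * w (x + v - v)) = fun x => ψ (x + v) * w x := by
      funext x; rw [add_sub_cancel_right]
    rw [← h0]
    exact congrArg _ h1.symm
  have claim2 : ∫ y, Dh y * w y = (∫ y, ψ y * (w (y - v) - w y)) / h := by
    rw [track, shift, ← integral_sub intC intB]
    congr 1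
    apply integral_congr_ae
    filter_upwards with y
    ring
  -- Claim 3
  have claim3 : ∫ y, ψ y * (w (y - v) - w y) ≤ ∫ y in K, ‖w (y - v) - w y‖ := by
    rw [← integral_indicator hKmeas]
    apply integral_mono intD (hg.norm.indicator hKmeas)
    intro y
    dsimp only
    by_cases hy : y ∈ K
    · rw [Set.indicator_of_mem hy]
      calc ψ y * (w (y - v) - w y) ≤ |ψ y * (w (y - v) - w y)| := le_abs_self _
        _ = |ψ y| * |w (y - v) - w y| := abs_mul _ _
        _ ≤ 1 * |w (y - v) - w y| := by
            apply mul_le_mul_of_nonneg_right (hψ1 y) (abs_nonneg _)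
        _ = ‖w (y - v) - w y‖ := by rw [one_mul, Real.norm_eq_abs]
    · rw [Set.indicator_of_notMem hy, image_eq_zero_of_notMem_tsupport hy, zero_mul]
  -- Claim 4 : covering estimate
  obtain ⟨R, hR⟩ := hK.isBounded.subset_closedBall 0
  set M : ℤ := ⌈R / h⌉ + 1 with hMdef
  set cen : (Fin n → ℤ) → (Fin n → ℝ) := fun k i => h * k i with hcendef
  set S : Finset (Fin n → ℤ) := (Fintype.piFinset fun _ : Fin n => Finset.Icc (-M) M).filter
    (fun k => (closedBall (cen k) h ∩ K).Nonempty) with hSdef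
  -- the double cubes of S sit inside U
  have hQ2U : ∀ k ∈ S, closedBall (cen k) (2 * h) ⊆ U := by
    intro k hk
    obtain ⟨z, hz1, hz2⟩ := (Finset.mem_filter.mp hk).2
    intro y' hy'
    apply hδ
    rw [Metric.mem_thickening_iff]
    refine ⟨z, hz2, ?_⟩
    calc dist y' z ≤ dist y' (cen k) + dist (cen k) z := dist_triangle _ _ _
      _ ≤ 2 * h + h := add_le_add (mem_closedBall.mp hy')
          (by rw [dist_comm]; exact mem_closedBall.mp hz1)
      _ = 3 * h := by ring
      _ < δ := h3δ
  have hQ2Ω : ∀ k ∈ S, closedBall (cen k) (2 * h) ⊆ Ω := fun k hk => (hQ2U k hk).trans hUΩ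
  -- covering of K
  have hcover : K ⊆ ⋃ k ∈ S, closedBall (cen k) h := by
    intro y hy
    set k : Fin n → ℤ := fun i' => ⌊y i' / h⌋ with hkdef
    have hmem : y ∈ closedBall (cen k) h := by
      rw [mem_closedBall]
      rw [dist_pi_le_iff hh.le]
      intro i'
      rw [Real.dist_eq]
      have e1 : h * (y i' / h) = y i' := mul_div_cancel₀ _ hh.ne'
      have f1 : h * (k i' : ℝ) ≤ y i' := by
        rw [hkdef]
        calc h * (⌊y i' / h⌋ : ℝ) ≤ h * (y i' / h) :=
              mul_le_mul_of_nonneg_left (Int.floor_le _) hh.le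
          _ = y i' := e1
      have f2 : y i' < h * (k i' : ℝ) + h := by
        rw [hkdef]
        have := Int.lt_floor_add_one (y i' / h)
        calc y i' = h * (y i' / h) := e1.symm
          _ < h * ((⌊y i' / h⌋ : ℝ) + 1) := by
              apply mul_lt_mul_of_pos_left this hh
          _ = h * (⌊y i' / h⌋ : ℝ) + h := by ring
      have : cen k i' = h * (k i' : ℝ) := rfl
      rw [this, abs_le]
      constructor <;> linarith
    have hbox : k ∈ Fintype.piFinset fun _ : Fin n => Finset.Icc (-M) M := by
      rw [Fintype.mem_piFinset]
      intro i'
      have hyR : |y i'| ≤ R := by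
        have h1 : dist (y i') ((0 : Fin n → ℝ) i') ≤ dist y 0 := dist_le_pi_dist y 0 i'
        have h2 : dist y 0 ≤ R := mem_closedBall.mp (hR hy)
        simpa [Real.dist_eq] using h1.trans h2
      rw [abs_le] at hyR
      have hup : k i' ≤ ⌈R / h⌉ := by
        rw [hkdef]
        calc ⌊y i' / h⌋ ≤ ⌊R / h⌋ :=
              Int.floor_le_floor (by gcongr; exact hyR.2)
          _ ≤ ⌈R / h⌉ := Int.floor_le_ceil _
      have hdown : -⌈R / h⌉ ≤ k i' := by
        rw [hkdef]
        have : ⌊-(R / h)⌋ ≤ ⌊y i' / h⌋ := by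
          apply Int.floor_le_floor
          rw [← neg_div]
          gcongr
          exact hyR.1
        rw [Int.floor_neg] at this
        exact this
      rw [Finset.mem_Icc, hMdef]
      omega
    have hkS : k ∈ S := by
      rw [hSdef, Finset.mem_filter]
      exact ⟨hbox, ⟨y, hmem, hy⟩⟩
    exact Set.mem_biUnion hkS hmem
  -- per-cube bound
  have hTmeas : Measurable fun y : Fin n → ℝ => y - v := measurable_id.sub_const v
  have hball : ∀ k ∈ S, ∫⁻ y in closedBall (cen k) h, ENNReal.ofReal ‖w (y - v) - w y‖
      ≤ ENNReal.ofReal (4 * h) * lam (closedBall (cen k) (2 * h)) := by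
    intro k hk
    obtain ⟨c0, hc0⟩ := hcube (cen k) (2 * h) (by linarith) (hQ2Ω k hk)
    have hQ1Q2 : closedBall (cen k) h ⊆ closedBall (cen k) (2 * h) :=
      closedBall_subset_closedBall (by linarith)
    have hsubΩ : closedBall (cen k) (2 * h) ⊆ Ω := hQ2Ω k hk
    have hQ1' : closedBall (cen k - v) h ⊆ closedBall (cen k) (2 * h) := by
      apply closedBall_subset_closedBall'
      have hd : dist (cen k - v) (cen k) = ‖v‖ := by
        rw [dist_eq_norm, sub_sub_cancel_left, norm_neg]
      rw [hd]; linarith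
    have hpre : (fun y : Fin n → ℝ => y - v) ⁻¹' closedBall (cen k - v) h
        = closedBall (cen k) h := by
      ext y
      simp only [Set.mem_preimage, mem_closedBall]
      rw [dist_sub_right]
    have hmapT : Measure.map (fun y : Fin n → ℝ => y - v) (volume.restrict (closedBall (cen k) h))
        = volume.restrict (closedBall (cen k - v) h) := by
      rw [← hpre, ← Measure.restrict_map hTmeas measurableSet_closedBall,
        (measurePreserving_sub_right volume v).map_eq]
    -- pointwise bound
    have hpt : ∀ y ∈ closedBall (cen k) h, ENNReal.ofReal ‖w (y - v) - w y‖
        ≤ ENNReal.ofReal ‖u (y - v) - c0‖ + ENNReal.ofReal ‖u y - c0‖ := by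
      intro y hy
      have hyΩ : y ∈ Ω := hsubΩ (hQ1Q2 hy)
      have hyvQ2 : y - v ∈ closedBall (cen k) (2 * h) := by
        rw [mem_closedBall]
        calc dist (y - v) (cen k) ≤ dist (y - v) y + dist y (cen k) := dist_triangle _ _ _
          _ ≤ ‖v‖ + h := by
              apply add_le_add _ (mem_closedBall.mp hy)
              rw [dist_eq_norm, sub_sub_cancel_left, norm_neg]
          _ ≤ 2 * h := by linarith
      have hyvΩ : y - v ∈ Ω := hsubΩ hyvQ2
      have hgy : w (y - v) - w y = u (y - v) i - u y i := by
        rw [hwdef, Set.indicator_of_mem hyvΩ, Set.indicator_of_mem hyΩ]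
      rw [hgy, ← ENNReal.ofReal_add (norm_nonneg _) (norm_nonneg _)]
      apply ENNReal.ofReal_le_ofReal
      have e2 : u (y - v) i - u y i = (u (y - v) - c0) i - (u y - c0) i := by
        simp only [Pi.sub_apply]; ring
      rw [Real.norm_eq_abs, e2]
      calc |(u (y - v) - c0) i - (u y - c0) i|
          ≤ |(u (y - v) - c0) i| + |(u y - c0) i| := abs_sub _ _
        _ ≤ ‖u (y - v) - c0‖ + ‖u y - c0‖ := by
            apply add_le_add
            · rw [← Real.norm_eq_abs]; exact norm_le_pi_norm _ i
            · rw [← Real.norm_eq_abs]; exact norm_le_pi_norm _ i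
    have h1 : ∫⁻ y in closedBall (cen k) h, ENNReal.ofReal ‖w (y - v) - w y‖
        ≤ ∫⁻ y in closedBall (cen k) h,
          (ENNReal.ofReal ‖u (y - v) - c0‖ + ENNReal.ofReal ‖u y - c0‖) :=
      lintegral_mono_ae (ae_restrict_of_forall_mem measurableSet_closedBall hpt)
    -- measurability
    have hmA : AEStronglyMeasurable (fun y : Fin n → ℝ => u (y - v))
        (volume.restrict (closedBall (cen k) h)) := by
      have hA : AEStronglyMeasurable u (volume.restrict (closedBall (cen k - v) h)) :=
        hu.aestronglyMeasurable.mono_measure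
          (Measure.restrict_mono (hQ1'.trans hsubΩ) le_rfl)
      rw [← hmapT] at hA
      exact hA.comp_measurable hTmeas
    have hmB : AEStronglyMeasurable u (volume.restrict (closedBall (cen k) h)) :=
      hu.aestronglyMeasurable.mono_measure
        (Measure.restrict_mono (hQ1Q2.trans hsubΩ) le_rfl)
    have hmA' : AEMeasurable (fun y : Fin n → ℝ => ENNReal.ofReal ‖u (y - v) - c0‖)
        (volume.restrict (closedBall (cen k) h)) :=
      ((hmA.sub aestronglyMeasurable_const).norm.aemeasurable).ennreal_ofReal
    have h2 : ∫⁻ y in closedBall (cen k) h,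
          (ENNReal.ofReal ‖u (y - v) - c0‖ + ENNReal.ofReal ‖u y - c0‖)
        = (∫⁻ y in closedBall (cen k) h, ENNReal.ofReal ‖u (y - v) - c0‖)
          + ∫⁻ y in closedBall (cen k) h, ENNReal.ofReal ‖u y - c0‖ :=
      lintegral_add_left' hmA' _
    -- translate the first piece
    have hmF : AEMeasurable (fun z : Fin n → ℝ => ENNReal.ofReal ‖u z - c0‖)
        (Measure.map (fun y : Fin n → ℝ => y - v) (volume.restrict (closedBall (cen k) h))) := by
      rw [hmapT]
      exact ((hu.aestronglyMeasurable.mono_measure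
        (Measure.restrict_mono (hQ1'.trans hsubΩ) le_rfl)).sub
          aestronglyMeasurable_const).norm.aemeasurable.ennreal_ofReal
    have h3 : ∫⁻ y in closedBall (cen k) h, ENNReal.ofReal ‖u (y - v) - c0‖
        = ∫⁻ z in closedBall (cen k - v) h, ENNReal.ofReal ‖u z - c0‖ := by
      rw [← hmapT, lintegral_map' hmF hTmeas.aemeasurable]
    have hQ2big : ∀ (A : Set (Fin n → ℝ)), A ⊆ closedBall (cen k) (2 * h) →
        ∫⁻ z in A, ENNReal.ofReal ‖u z - c0‖
        ≤ ENNReal.ofReal (2 * h) * lam (closedBall (cen k) (2 * h)) := by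
      intro A hA
      have step : ∫⁻ z in A, ENNReal.ofReal ‖u z - c0‖
          ≤ ∫⁻ z in closedBall (cen k) (2 * h), ENNReal.ofReal ‖u z - c0‖ :=
        lintegral_mono' (Measure.restrict_mono hA le_rfl) le_rfl
      have hint : Integrable (fun z => u z - c0) (volume.restrict (closedBall (cen k) (2 * h))) := by
        apply Integrable.sub (hu.mono_measure (Measure.restrict_mono hsubΩ le_rfl))
        exact integrableOn_const measure_closedBall_lt_top.ne
      have heq : ∫⁻ z in closedBall (cen k) (2 * h), ENNReal.ofReal ‖u z - c0‖
          = ENNReal.ofReal (∫ z in closedBall (cen k) (2 * h), ‖u z - c0‖) := by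
        rw [ofReal_integral_norm_eq_lintegral_enorm hint]
        congr 1
        funext z
        rw [ofReal_norm]
      refine step.trans ?_
      rw [heq]
      calc ENNReal.ofReal (∫ z in closedBall (cen k) (2 * h), ‖u z - c0‖)
          ≤ ENNReal.ofReal (2 * h * (lam (closedBall (cen k) (2 * h))).toReal) :=
            ENNReal.ofReal_le_ofReal hc0
        _ = ENNReal.ofReal (2 * h) * lam (closedBall (cen k) (2 * h)) := by
            rw [ENNReal.ofReal_mul (by linarith), ENNReal.ofReal_toReal (measure_ne_top lam _)]
    calc ∫⁻ y in closedBall (cen k) h, ENNReal.ofReal ‖w (y - v) - w y‖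
        ≤ (∫⁻ y in closedBall (cen k) h, ENNReal.ofReal ‖u (y - v) - c0‖)
          + ∫⁻ y in closedBall (cen k) h, ENNReal.ofReal ‖u y - c0‖ := h1.trans (le_of_eq h2)
      _ ≤ ENNReal.ofReal (2 * h) * lam (closedBall (cen k) (2 * h))
          + ENNReal.ofReal (2 * h) * lam (closedBall (cen k) (2 * h)) := by
          apply add_le_add
          · rw [h3]; exact hQ2big _ hQ1'
          · exact hQ2big _ hQ1Q2
      _ = ENNReal.ofReal (4 * h) * lam (closedBall (cen k) (2 * h)) := by
          rw [← add_mul, ← ENNReal.ofReal_add (by linarith) (by linarith)]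
          congr 1
          ring
  -- assemble the lintegral bound over K
  have hlin : ∫⁻ y in K, ENNReal.ofReal ‖w (y - v) - w y‖
      ≤ ENNReal.ofReal (4 * h) * ((5 : ENNReal) ^ n * lam U) := by
    calc ∫⁻ y in K, ENNReal.ofReal ‖w (y - v) - w y‖
        ≤ ∫⁻ y in ⋃ k ∈ S, closedBall (cen k) h, ENNReal.ofReal ‖w (y - v) - w y‖ :=
          lintegral_mono' (Measure.restrict_mono hcover le_rfl) le_rfl
      _ ≤ ∑ k ∈ S, ∫⁻ y in closedBall (cen k) h, ENNReal.ofReal ‖w (y - v) - w y‖ :=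
          lintegral_finset_biUnion_le _ _ _ _
      _ ≤ ∑ k ∈ S, ENNReal.ofReal (4 * h) * lam (closedBall (cen k) (2 * h)) :=
          Finset.sum_le_sum hball
      _ = ENNReal.ofReal (4 * h) * ∑ k ∈ S, lam (closedBall (cen k) (2 * h)) := by
          rw [Finset.mul_sum]
      _ ≤ ENNReal.ofReal (4 * h) * ((5 : ENNReal) ^ n * lam U) := by
          gcongr
          exact sum_measure_cubes_le lam hh hUopen.measurableSet S hQ2U
  have hRHSne : ENNReal.ofReal (4 * h) * ((5 : ENNReal) ^ n * lam U) ≠ ⊤ := by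
    apply ENNReal.mul_ne_top ENNReal.ofReal_ne_top
    apply ENNReal.mul_ne_top _ (measure_ne_top lam U)
    simp [ENNReal.pow_ne_top]
  have claim4 : ∫ y in K, ‖w (y - v) - w y‖ ≤ 4 * 5 ^ n * (lam U).toReal * h := by
    have hmeq : ∫ y in K, ‖w (y - v) - w y‖
        = (∫⁻ y in K, ENNReal.ofReal ‖w (y - v) - w y‖).toReal := by
      rw [integral_eq_lintegral_of_nonneg_ae]
      · exact Filter.Eventually.of_forall fun y => norm_nonneg _
      · exact (hg.aestronglyMeasurable.norm).restrict
    rw [hmeq]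
    have := ENNReal.toReal_mono hRHSne hlin
    refine this.trans (le_of_eq ?_)
    rw [ENNReal.toReal_mul, ENNReal.toReal_mul, ENNReal.toReal_ofReal (by linarith)]
    simp only [ENNReal.toReal_pow]
    norm_num
    ring
  -- final combination
  have hfs : ∫ y, Dh y * w y ≤ 4 * 5 ^ n * (lam U).toReal := by
    rw [claim2, div_le_iff₀ hh]
    exact claim3.trans claim4
  have hptw : ∀ y, D y * w y ≤ Dh y * w y + ε' * ‖w y‖ := by
    intro y
    have : (D y - Dh y) * w y ≤ ε' * ‖w y‖ := by
      calc (D y - Dh y) * w y ≤ |(D y - Dh y) * w y| := le_abs_self _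
        _ = |D y - Dh y| * |w y| := abs_mul _ _
        _ ≤ ε' * |w y| := mul_le_mul_of_nonneg_right (claim1 y) (abs_nonneg _)
        _ = ε' * ‖w y‖ := by rw [Real.norm_eq_abs]
    nlinarith [this]
  calc ∫ y, D y * w y ≤ ∫ y, (Dh y * w y + ε' * ‖w y‖) := by
        apply integral_mono hint1 (hint2.add hint3) hptw
    _ = (∫ y, Dh y * w y) + ε' * I1 := by
        rw [integral_add hint2 hint3, integral_const_mul]
    _ ≤ 4 * 5 ^ n * (lam U).toReal + ε' * I1 := by linarith [hfs]
    _ ≤ 4 * 5 ^ n * (lam U).toReal + ε := by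
        have : ε' * I1 ≤ ε := by
          rw [hε'def, div_mul_eq_mul_div, div_le_iff₀ (by linarith)]
          nlinarith
        linarith

end

/-- Lemma 4.2 (abstract BV criterion). We work in `ℝⁿ` with the sup-norm, so that closed
coordinate cubes `Q(x,r)` of center `x` and half side-length `r` are exactly closed balls.
If `u ∈ L¹(Ω; ℝᴺ)` admits, on each cube `Q(x,r) ⊆ Ω`, a value `c` with
`∫_{Q(x,r)} |u − c| ≤ r · λ(Q(x,r))`, then `u ∈ BV(Ω; ℝᴺ)` with `|Du| ≤ C·λ` for a
dimensional constant `C`; the conclusion is expressed distributionally: for every open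
`U ⊆ Ω` and every `C¹` test vector field `φ = (φ₁,…,φ_N)` compactly supported in `U` with
`‖φᵢ‖ ≤ 1`, the pairing of `u` with the divergence of `φ` is at most `C·λ(U)`. -/
theorem bv_criterion_from_cube_oscillation (n N : ℕ) (Ω : Set (Fin n → ℝ))
    (hΩ : IsOpen Ω)
    (u : (Fin n → ℝ) → (Fin N → ℝ))
    (hu : Integrable u (volume.restrict Ω))
    (lam : Measure (Fin n → ℝ)) (hlam : IsFiniteMeasure lam)
    (hcube : ∀ (x : Fin n → ℝ) (r : ℝ), 0 < r → Metric.closedBall x r ⊆ Ω →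
      ∃ c : Fin N → ℝ,
        (∫ y in Metric.closedBall x r, ‖u y - c‖) ≤
          r * (lam (Metric.closedBall x r)).toReal) :
    ∃ C : ℝ, 0 < C ∧
      ∀ U : Set (Fin n → ℝ), IsOpen U → U ⊆ Ω →
        ∀ φ : Fin N → (Fin n → ℝ) → (Fin n → ℝ),
          (∀ i, ContDiff ℝ 1 (φ i)) → (∀ i, HasCompactSupport (φ i)) →
          (∀ i, tsupport (φ i) ⊆ U) → (∀ i x, ‖φ i x‖ ≤ 1) →
          (∫ y in Ω, ∑ i, u y i * ∑ j, fderiv ℝ (φ i) y (Pi.single j 1) j) ≤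
            C * (lam U).toReal := by
  classical
  haveI := hlam
  refine ⟨4 * 5 ^ n * n * N + 1, by positivity, ?_⟩
  intro U hUopen hUΩ φ hφ hφc hφU hφ1
  have hlamU : (0:ℝ) ≤ (lam U).toReal := ENNReal.toReal_nonneg
  -- component integrability of u
  have hui : ∀ i : Fin N, IntegrableOn (fun y => u y i) Ω volume := fun i =>
    (ContinuousLinearMap.proj (R := ℝ) (φ := fun _ : Fin N => ℝ) i).integrable_comp hu
  -- the derivative entries
  set D : Fin N → Fin n → (Fin n → ℝ) → ℝ :=
    fun i j y => fderiv ℝ (φ i) y (Pi.single j 1) j with hDdef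
  have hDcont : ∀ i j, Continuous (D i j) := fun i j =>
    (continuous_apply j).comp (((hφ i).continuous_fderiv one_ne_zero).clm_apply continuous_const)
  have hDsupp : ∀ i j, Function.support (D i j) ⊆ tsupport (φ i) := by
    intro i j y hy
    apply support_fderiv_subset ℝ (f := φ i)
    intro h0
    exact hy (by simp [hDdef, h0])
  have hDc : ∀ i j, HasCompactSupport (D i j) := fun i j => (hφc i).mono' (hDsupp i j)
  have hint : ∀ (i : Fin N) (j : Fin n),
      Integrable (fun y => u y i * D i j y) (volume.restrict Ω) := by
    intro i j
    obtain ⟨C0, hC0⟩ := (hDcont i j).bounded_above_of_compact_support (hDc i j)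
    have := (hui i).bdd_mul (hDcont i j).aestronglyMeasurable (Filter.Eventually.of_forall hC0)
    simpa [mul_comm] using this
  -- split the integral
  have hsplit : ∫ y in Ω, ∑ i, u y i * ∑ j, D i j y
      = ∑ i : Fin N, ∑ j : Fin n, ∫ y in Ω, u y i * D i j y := by
    have e1 : (fun y => ∑ i, u y i * ∑ j, D i j y)
        = fun y => ∑ i : Fin N, ∑ j : Fin n, u y i * D i j y := by
      funext y
      exact Finset.sum_congr rfl fun i _ => Finset.mul_sum _ _ _
    rw [e1, integral_finset_sum _ fun i _ => integrable_finset_sum _ fun j _ => hint i j]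
    exact Finset.sum_congr rfl fun i _ =>
      integral_finset_sum _ fun j _ => hint i j
  rw [hsplit]
  -- bound each term using the scalar estimate
  have key : ∀ (i : Fin N) (j : Fin n),
      ∫ y in Ω, u y i * D i j y ≤ 4 * 5 ^ n * (lam U).toReal := by
    intro i j
    set ψ : (Fin n → ℝ) → ℝ := fun z => φ i z j with hψdef
    have hψcd : ContDiff ℝ 1 ψ :=
      (ContinuousLinearMap.proj (R := ℝ) (φ := fun _ : Fin n => ℝ) j).contDiff.comp (hφ i)
    have hsuppsub : Function.support ψ ⊆ tsupport (φ i) := by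
      intro y hy
      apply subset_tsupport
      intro h0
      exact hy (by simp [hψdef, h0])
    have hψcs : HasCompactSupport ψ := (hφc i).mono' hsuppsub
    have hψU : tsupport ψ ⊆ U := (closure_minimal hsuppsub (isClosed_tsupport _)).trans (hφU i)
    have hψ1 : ∀ x, |ψ x| ≤ 1 := by
      intro x
      calc |ψ x| = ‖φ i x j‖ := by rw [Real.norm_eq_abs]
        _ ≤ ‖φ i x‖ := norm_le_pi_norm _ j
        _ ≤ 1 := hφ1 i x
    have he : ‖(Pi.single j 1 : Fin n → ℝ)‖ ≤ 1 := by
      rw [Pi.norm_single, norm_one]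
    have hder : ∀ y, fderiv ℝ ψ y (Pi.single j 1) = D i j y := by
      intro y
      have hdiff : DifferentiableAt ℝ (φ i) y := ((hφ i).differentiable one_ne_zero).differentiableAt
      have hcomp : ψ = (ContinuousLinearMap.proj (R := ℝ) (φ := fun _ : Fin n => ℝ) j) ∘ φ i := rfl
      rw [hcomp, fderiv_comp y (ContinuousLinearMap.proj j).differentiableAt hdiff,
        ContinuousLinearMap.fderiv]
      rfl
    have heq : ∫ y in Ω, u y i * D i j y = ∫ y in Ω, u y i * fderiv ℝ ψ y (Pi.single j 1) := by
      apply integral_congr_ae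
      filter_upwards with y
      rw [hder y]
    rw [heq]
    exact scalar_estimate hΩ hu hcube hUopen hUΩ hψcd hψcs hψU hψ1 he i
  calc ∑ i : Fin N, ∑ j : Fin n, ∫ y in Ω, u y i * D i j y
      ≤ ∑ i : Fin N, ∑ j : Fin n, 4 * 5 ^ n * (lam U).toReal :=
        Finset.sum_le_sum fun i _ => Finset.sum_le_sum fun j _ => key i j
    _ = (N : ℝ) * ((n : ℝ) * (4 * 5 ^ n * (lam U).toReal)) := by
        simp [Finset.sum_const, Finset.card_univ, mul_comm]
    _ ≤ (4 * 5 ^ n * n * N + 1) * (lam U).toReal := by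
        nlinarith [hlamU, pow_pos (show (0:ℝ) < 5 by norm_num) n]
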